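/- Let n ≥ 1, 1 < p < ∞, δ > 0 and let N > n be real. There is a constant C > 0 such that for every j₀ ∈ ℤ, k₀ ∈ ℤ^n, every j ≥ j₀, and every family (a^{ε'}_{j',k'})_{ε'∈E_n, j'∈ℤ, k'∈ℤ^n} of nonnegative real numbers: Σ_{ε∈E_n} Σ_{k : Q_{j,k} ⊆ Q_{j₀,k₀}} ( Σ_{j' ≥ j−5} Σ_{w∈ℤ^n} (1+|w|)^{−N} ( Σ_{ε'∈E_n} Σ_{k' : Q_{j',k'} ⊆ Q^w_{j,k}} (a^{ε'}_{j',k'})^p )^{1/p} )^p ≤ C Σ_{j' ≥ j−5} 2^{δ(j'−j)} Σ_{w∈ℤ^n} (1+|w|)^{−N} Σ_{ε'∈E_n} Σ_{k' : Q_{j',k'} ⊆ Q^w_{j₀,k₀}} (a^{ε'}_{j',k'})^p, both sides interpreted in [0,∞]. -/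

import Mathlib

noncomputable section

open MeasureTheory Real Complex
open scoped ENNReal NNReal

/-- `ℝⁿ` modeled as functions `Fin n → ℝ`. -/
abbrev Vec (n : ℕ) : Type := Fin n → ℝ

/-- Integer lattice `ℤⁿ`. -/
abbrev IVec (n : ℕ) : Type := Fin n → ℤ

/-- The index set `E_n = {0,1}ⁿ \ {0}`, with `{0,1}ⁿ` modeled as `Fin n → Bool`. -/
abbrev En (n : ℕ) : Type := {ε : Fin n → Bool // ε ≠ fun _ => false}

/-- The Euclidean norm on `Vec n`. -/
def enorm2 {n : ℕ} (x : Vec n) : ℝ := Real.sqrt (∑ i, (x i) ^ 2)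

/-- The dyadic cube `Q_{j,k} = {x : 2^j x − k ∈ [0,1)ⁿ}` of side length `2^{−j}`. -/
def dyadicCube (n : ℕ) (j : ℤ) (k : IVec n) : Set (Vec n) :=
  {x | ∀ i, (k i : ℝ) ≤ (2:ℝ) ^ j * x i ∧ (2:ℝ) ^ j * x i < (k i : ℝ) + 1}

/-- `Q^w_{j,k} = 2^{8−j} w + tilde-Q_{j,k}`, where `tilde-Q_{j,k}` is the unique dyadic
cube of side length `2^{8−j}` containing `Q_{j,k}` (its index is `⌊k/2^8⌋`). -/
def QW (n : ℕ) (j : ℤ) (k w : IVec n) : Set (Vec n) :=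
  dyadicCube n (j - 8) (fun i => Int.fdiv (k i) 256 + w i)

lemma aux_ediv_eq_iff {d q x : ℤ} (hd : 0 < d) : x / d = q ↔ q * d ≤ x ∧ x < (q + 1) * d := by
  constructor
  · rintro rfl
    exact ⟨(Int.le_ediv_iff_mul_le hd).1 le_rfl,
      (Int.ediv_lt_iff_lt_mul hd).1 (Int.lt_succ_self _)⟩
  · rintro ⟨h1, h2⟩
    have l1 : q ≤ x / d := (Int.le_ediv_iff_mul_le hd).2 h1
    have l2 : x / d < q + 1 := (Int.ediv_lt_iff_lt_mul hd).2 h2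
    omega

lemma aux_ediv_bounds {d x : ℤ} (hd : 0 < d) : (x / d) * d ≤ x ∧ x < (x / d + 1) * d :=
  (aux_ediv_eq_iff hd).1 rfl

lemma aux_ediv_ediv {a b : ℤ} (x : ℤ) (ha : 0 < a) (hb : 0 < b) : x / a / b = x / (a * b) := by
  have hab : 0 < a * b := mul_pos ha hb
  have h := aux_ediv_bounds (x := x) hab
  rw [aux_ediv_eq_iff hb]
  constructor
  · rw [Int.le_ediv_iff_mul_le ha, show x / (a*b) * b * a = x / (a*b) * (a*b) by ring]
    exact h.1
  · rw [Int.ediv_lt_iff_lt_mul ha, show (x / (a*b) + 1) * b * a = (x / (a*b) + 1) * (a*b) by ring]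
    exact h.2

lemma cube_subset_iff (n : ℕ) {J j' : ℤ} (h : J ≤ j') (k' m : IVec n) :
    dyadicCube n j' k' ⊆ dyadicCube n J m ↔ ∀ i, (k' i) / ((2:ℤ) ^ (j' - J).toNat) = m i := by
  set e : ℕ := (j' - J).toNat with he
  have he2 : (0:ℤ) < 2 ^ e := by positivity
  have hc : (0:ℝ) < (2:ℝ) ^ (j' - J) := by positivity
  have hpow : ((2:ℝ) ^ e : ℝ) = (2:ℝ) ^ (j' - J) := by
    rw [← zpow_natCast, he, Int.toNat_of_nonneg (by omega)]
  constructor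
  · intro hs i
    have hx : (fun i => (k' i : ℝ) * (2:ℝ) ^ (-j')) ∈ dyadicCube n j' k' := by
      intro i'
      have hh : (2:ℝ) ^ j' * ((k' i' : ℝ) * (2:ℝ) ^ (-j')) = (k' i' : ℝ) := by
        rw [mul_comm ((k' i' : ℝ)) _, ← mul_assoc, ← zpow_add₀ (two_ne_zero), add_neg_cancel,
          zpow_zero, one_mul]
      rw [hh]; constructor <;> [exact le_rfl; linarith]
    have hm := hs hx i
    obtain ⟨hm1, hm2⟩ := hm
    have hJ : (2:ℝ) ^ J * ((k' i : ℝ) * (2:ℝ) ^ (-j')) = (k' i : ℝ) / (2:ℝ) ^ (j' - J) := by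
      rw [div_eq_mul_inv, ← zpow_neg]
      rw [mul_comm ((k' i : ℝ)) _, ← mul_assoc, ← zpow_add₀ (two_ne_zero)]
      ring_nf
    rw [hJ] at hm1 hm2
    rw [le_div_iff₀ hc] at hm1
    rw [div_lt_iff₀ hc] at hm2
    rw [aux_ediv_eq_iff he2]
    constructor
    · have : ((m i * 2 ^ e : ℤ) : ℝ) ≤ (k' i : ℝ) := by push_cast; rw [hpow]; linarith
      exact_mod_cast this
    · have : (k' i : ℝ) < (((m i + 1) * 2 ^ e : ℤ) : ℝ) := by push_cast; rw [hpow]; linarith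
      exact_mod_cast this
  · intro hk x hx i
    have hki := (aux_ediv_eq_iff he2).1 (hk i)
    obtain ⟨hx1, hx2⟩ := hx i
    have hJ : (2:ℝ) ^ J * x i = ((2:ℝ) ^ j' * x i) / (2:ℝ) ^ (j' - J) := by
      rw [eq_div_iff (ne_of_gt hc), mul_comm ((2:ℝ) ^ J) (x i), mul_assoc,
        ← zpow_add₀ (two_ne_zero)]
      ring_nf
    rw [hJ]
    have c1 : ((m i * 2 ^ e : ℤ) : ℝ) ≤ (k' i : ℝ) := by exact_mod_cast hki.1
    have c2 : ((k' i : ℝ) + 1) ≤ (((m i + 1) * 2 ^ e : ℤ) : ℝ) := by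
      have : k' i + 1 ≤ (m i + 1) * 2 ^ e := hki.2
      exact_mod_cast this
    push_cast at c1 c2
    rw [hpow] at c1 c2
    constructor
    · rw [le_div_iff₀ hc]; linarith
    · rw [div_lt_iff₀ hc]; linarith


lemma enorm2_nonneg {n : ℕ} (x : Vec n) : 0 ≤ enorm2 x := Real.sqrt_nonneg _

lemma abs_le_enorm2 {n : ℕ} (x : Vec n) (i : Fin n) : |x i| ≤ enorm2 x := by
  rw [← Real.sqrt_sq_eq_abs]
  exact Real.sqrt_le_sqrt (Finset.single_le_sum (f := fun i => (x i)^2)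
    (fun i _ => sq_nonneg _) (Finset.mem_univ i))

lemma enorm2_le_sqrt_card_mul {n : ℕ} (x : Vec n) (M : ℝ) (hM : 0 ≤ M)
    (h : ∀ i, |x i| ≤ M) : enorm2 x ≤ Real.sqrt n * M := by
  have : enorm2 x ≤ Real.sqrt (n * M^2) := by
    apply Real.sqrt_le_sqrt
    calc ∑ i, (x i)^2 ≤ ∑ _i : Fin n, M^2 := by
          apply Finset.sum_le_sum
          intro i _
          calc (x i)^2 = |x i|^2 := (_root_.sq_abs _).symm
            _ ≤ M^2 := by nlinarith [h i, abs_nonneg (x i)]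
      _ = n * M^2 := by simp [Finset.sum_const, nsmul_eq_mul]
  calc enorm2 x ≤ Real.sqrt (n * M^2) := this
    _ = Real.sqrt n * M := by
        rw [Real.sqrt_mul (by positivity), Real.sqrt_sq hM]

/-- The weight `(1+|w|)^{-N}` as an element of `ℝ≥0∞`. -/
def cwt {n : ℕ} (N : ℝ) (w : IVec n) : ℝ≥0∞ :=
  ENNReal.ofReal ((1 + enorm2 (fun i => (w i : ℝ))) ^ (-N))

def Wsum (n : ℕ) (N : ℝ) : ℝ≥0∞ := ∑' w : IVec n, cwt N w

def Gam (η : ℝ) : ℝ≥0∞ := ∑' m : ℕ, ENNReal.ofReal ((2:ℝ) ^ (-(η * ((m:ℝ) - 5))))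

def shiftEquiv5 (j : ℤ) : ℕ ≃ {j' : ℤ // j - 5 ≤ j'} where
  toFun m := ⟨j - 5 + m, by omega⟩
  invFun j' := (j'.val - (j - 5)).toNat
  left_inv m := by simp
  right_inv j' := by
    have := j'.2
    apply Subtype.ext
    simp only
    omega

lemma geoEq (j : ℤ) (η : ℝ) :
    ∑' (j' : {j' : ℤ // j - 5 ≤ j'}),
      ENNReal.ofReal ((2:ℝ) ^ (-(η * (((j' : ℤ) : ℝ) - (j : ℝ))))) = Gam η := by
  rw [← (shiftEquiv5 j).tsum_eq]
  apply tsum_congr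
  intro m
  congr 2
  have hm : ((shiftEquiv5 j m : ℤ) : ℝ) = (j:ℝ) - 5 + m := by
    show (((j - 5 + m : ℤ)) : ℝ) = (j:ℝ) - 5 + m
    push_cast; ring
  rw [hm]; ring

lemma Gam_lt_top {η : ℝ} (hη : 0 < η) : Gam η < ⊤ := by
  have hx1 : (2:ℝ) ^ (-η) < 1 :=
    Real.rpow_lt_one_of_one_lt_of_neg one_lt_two (by linarith)
  have hb : ∀ m : ℕ, ENNReal.ofReal ((2:ℝ) ^ (-(η * ((m:ℝ) - 5))))
      = ENNReal.ofReal ((2:ℝ) ^ (5*η)) * (ENNReal.ofReal ((2:ℝ) ^ (-η))) ^ m := by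
    intro m
    rw [← ENNReal.ofReal_pow (by positivity), ← ENNReal.ofReal_mul (by positivity)]
    congr 1
    rw [← Real.rpow_natCast ((2:ℝ) ^ (-η)) m, ← Real.rpow_mul (by norm_num),
      ← Real.rpow_add (by norm_num)]
    ring_nf
  unfold Gam
  rw [tsum_congr hb, ENNReal.tsum_mul_left, ENNReal.tsum_geometric]
  apply ENNReal.mul_lt_top (by simp)
  rw [ENNReal.inv_lt_top]
  rw [tsub_pos_iff_lt]
  exact ENNReal.ofReal_lt_one.2 hx1

lemma oneDim {σ : ℝ} (hσ : 1 < σ) :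
    ∑' m : ℤ, ENNReal.ofReal ((1 + |(m:ℝ)|) ^ (-σ)) < ⊤ := by
  set f : ℤ → ℝ≥0∞ := fun m => ENNReal.ofReal ((1 + |(m:ℝ)|) ^ (-σ)) with hf
  have hsurj : Function.Surjective (fun bm : Bool × ℕ => if bm.1 then (bm.2 : ℤ) else -(bm.2 : ℤ)) := by
    intro m
    rcases le_or_gt 0 m with h | h
    · exact ⟨(true, m.toNat), by simp [Int.toNat_of_nonneg h]⟩
    · exact ⟨(false, (-m).toNat), by simp [Int.toNat_of_nonneg (by omega : (0:ℤ) ≤ -m)]⟩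
  have h1 : ∑' m : ℤ, f m ≤ ∑' bm : Bool × ℕ, f (if bm.1 then (bm.2 : ℤ) else -(bm.2 : ℤ)) :=
    ENNReal.tsum_le_tsum_comp_of_surjective hsurj f
  have h2 : ∀ bm : Bool × ℕ, f (if bm.1 then (bm.2 : ℤ) else -(bm.2 : ℤ))
      = ENNReal.ofReal ((1 + (bm.2:ℝ)) ^ (-σ)) := by
    rintro ⟨b, m⟩
    cases b <;> simp [hf, abs_of_nonneg (Nat.cast_nonneg (α := ℝ) m)]
  rw [tsum_congr h2] at h1
  have hsum : Summable (fun m : ℕ => (1 + (m:ℝ)) ^ (-σ)) := by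
    rw [← summable_nat_add_iff 1]
    have hg : Summable (fun m : ℕ => ((m:ℝ) + 1) ^ (-σ)) := by
      have h0 : Summable (fun m : ℕ => (m:ℝ) ^ (-σ)) :=
        Real.summable_nat_rpow.2 (by linarith)
      have := (summable_nat_add_iff (f := fun m : ℕ => (m:ℝ) ^ (-σ)) 1).2 h0
      apply this.congr
      intro m; push_cast; ring_nf
    apply Summable.of_nonneg_of_le (fun m => by positivity) _ hg
    intro m
    apply Real.rpow_le_rpow_of_nonpos (by positivity) (by push_cast; linarith) (by linarith)
  have hS : ∑' m : ℕ, ENNReal.ofReal ((1 + (m:ℝ)) ^ (-σ)) < ⊤ := by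
    rw [← ENNReal.ofReal_tsum_of_nonneg (fun m => by positivity) hsum]
    exact ENNReal.ofReal_lt_top
  refine lt_of_le_of_lt h1 ?_
  rw [ENNReal.tsum_prod']
  rw [tsum_fintype]
  simp only [Fintype.sum_bool]
  exact ENNReal.add_lt_top.2 ⟨hS, hS⟩

lemma tsum_pi_pow (h : ℤ → ℝ≥0∞) : ∀ m : ℕ,
    ∑' w : (Fin m → ℤ), ∏ i, h (w i) = (∑' x : ℤ, h x) ^ m := by
  intro m
  induction m with
  | zero => simp [tsum_fintype]
  | succ m ih =>
    rw [← (Fin.consEquiv (fun _ : Fin (m+1) => ℤ)).tsum_eq]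
    have hb : ∀ xu : ℤ × (Fin m → ℤ),
        (∏ i, h ((Fin.consEquiv (fun _ : Fin (m+1) => ℤ)) xu i))
          = h xu.1 * ∏ i : Fin m, h (xu.2 i) := by
      rintro ⟨x, u⟩
      rw [Fin.prod_univ_succ]
      simp [Fin.consEquiv]
    rw [tsum_congr hb, ENNReal.tsum_prod']
    calc ∑' (x : ℤ) (u : Fin m → ℤ), h x * ∏ i : Fin m, h (u i)
        = ∑' (x : ℤ), h x * ∑' (u : Fin m → ℤ), ∏ i : Fin m, h (u i) := by
          apply tsum_congr; intro x; rw [ENNReal.tsum_mul_left]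
      _ = (∑' x : ℤ, h x) * (∑' x : ℤ, h x) ^ m := by
          rw [ENNReal.tsum_mul_right, ih]
      _ = (∑' x : ℤ, h x) ^ (m+1) := by ring

lemma Wsum_lt_top {n : ℕ} {N : ℝ} (hn : 1 ≤ n) (hN : (n:ℝ) < N) : Wsum n N < ⊤ := by
  have hn0 : (0:ℝ) < n := by exact_mod_cast hn
  set σ : ℝ := N / n with hσdef
  have hσ : 1 < σ := (one_lt_div hn0).2 hN
  have hpoint : ∀ w : IVec n, cwt N w ≤ ∏ i, ENNReal.ofReal ((1 + |((w i : ℤ):ℝ)|) ^ (-σ)) := by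
    intro w
    have hprod_nonneg : ∀ i : Fin n, (0:ℝ) ≤ (1 + |((w i : ℤ):ℝ)|) ^ (-σ) := fun i => by positivity
    rw [← ENNReal.ofReal_prod_of_nonneg (fun i _ => hprod_nonneg i)]
    apply ENNReal.ofReal_le_ofReal
    -- (1+‖w‖)^{-N} ≤ ∏ (1+|w i|)^{-σ}
    have hground : ∀ i : Fin n, (0:ℝ) < 1 + |((w i : ℤ):ℝ)| := fun i => by positivity
    have hprod : ∏ i, (1 + |((w i : ℤ):ℝ)|) ≤ (1 + enorm2 (fun i => ((w i : ℤ):ℝ))) ^ n := by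
      calc ∏ i, (1 + |((w i : ℤ):ℝ)|)
          ≤ ∏ _i : Fin n, (1 + enorm2 (fun i => ((w i : ℤ):ℝ))) := by
            apply Finset.prod_le_prod (fun i _ => le_of_lt (hground i))
            intro i _
            have := abs_le_enorm2 (fun i => ((w i : ℤ):ℝ)) i
            linarith
        _ = (1 + enorm2 (fun i => ((w i : ℤ):ℝ))) ^ n := by
            rw [Finset.prod_const, Finset.card_univ, Fintype.card_fin]
    have he0 : (0:ℝ) < 1 + enorm2 (fun i => ((w i : ℤ):ℝ)) := by
      have := enorm2_nonneg (fun i => ((w i : ℤ):ℝ)); linarith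
    -- take rpow σ of hprod then invert
    have hL : ∏ i, (1 + |((w i : ℤ):ℝ)|) ^ σ ≤ (1 + enorm2 (fun i => ((w i : ℤ):ℝ))) ^ N := by
      have h1 : ∏ i, (1 + |((w i : ℤ):ℝ)|) ^ σ = (∏ i, (1 + |((w i : ℤ):ℝ)|)) ^ σ :=
        Real.finset_prod_rpow _ _ (fun i _ => le_of_lt (hground i)) σ
      rw [h1]
      calc (∏ i, (1 + |((w i : ℤ):ℝ)|)) ^ σ
          ≤ ((1 + enorm2 (fun i => ((w i : ℤ):ℝ))) ^ n) ^ σ := by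
            apply Real.rpow_le_rpow (Finset.prod_nonneg (fun i _ => le_of_lt (hground i)))
              hprod (by positivity)
        _ = (1 + enorm2 (fun i => ((w i : ℤ):ℝ))) ^ N := by
            rw [← Real.rpow_natCast (1 + enorm2 (fun i => ((w i : ℤ):ℝ))) n,
              ← Real.rpow_mul (le_of_lt he0)]
            congr 1
            rw [hσdef]; field_simp
    -- now: x^{-N} ≤ ∏ y_i^{-σ}
    have hprodpos : (0:ℝ) < ∏ i, (1 + |((w i : ℤ):ℝ)|) ^ σ :=
      Finset.prod_pos (fun i _ => Real.rpow_pos_of_pos (hground i) σ)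
    have hinv := one_div_le_one_div_of_le hprodpos hL
    calc (1 + enorm2 (fun i => ((w i : ℤ):ℝ))) ^ (-N)
        = 1 / (1 + enorm2 (fun i => ((w i : ℤ):ℝ))) ^ N := by
          rw [Real.rpow_neg (le_of_lt he0), one_div]
      _ ≤ 1 / ∏ i, (1 + |((w i : ℤ):ℝ)|) ^ σ := hinv
      _ = ∏ i, (1 + |((w i : ℤ):ℝ)|) ^ (-σ) := by
          rw [one_div, ← Finset.prod_inv_distrib]
          apply Finset.prod_congr rfl
          intro i _
          rw [Real.rpow_neg (le_of_lt (hground i))]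
  calc Wsum n N ≤ ∑' w : IVec n, ∏ i, ENNReal.ofReal ((1 + |((w i : ℤ):ℝ)|) ^ (-σ)) :=
        ENNReal.tsum_le_tsum hpoint
    _ = (∑' x : ℤ, ENNReal.ofReal ((1 + |(x:ℝ)|) ^ (-σ))) ^ n :=
        tsum_pi_pow (fun x => ENNReal.ofReal ((1 + |(x:ℝ)|) ^ (-σ))) n
    _ < ⊤ := ENNReal.pow_lt_top (oneDim hσ)

lemma holder_tsum {ι : Type*} (f g : ι → ℝ≥0∞) {p q : ℝ} (hpq : Real.HolderConjugate p q) :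
    ∑' i, f i * g i ≤ (∑' i, f i ^ p) ^ (1/p) * (∑' i, g i ^ q) ^ (1/q) := by
  rw [ENNReal.tsum_eq_iSup_sum]
  refine iSup_le fun s => ?_
  refine (ENNReal.inner_le_Lp_mul_Lq s f g hpq).trans ?_
  have h1 : (∑ i ∈ s, f i ^ p) ^ (1/p) ≤ (∑' i, f i ^ p) ^ (1/p) :=
    ENNReal.rpow_le_rpow (ENNReal.sum_le_tsum s) hpq.one_div_nonneg
  have h2 : (∑ i ∈ s, g i ^ q) ^ (1/q) ≤ (∑' i, g i ^ q) ^ (1/q) :=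
    ENNReal.rpow_le_rpow (ENNReal.sum_le_tsum s) hpq.symm.one_div_nonneg
  exact mul_le_mul' h1 h2

lemma holder_pow {ι : Type*} (f g : ι → ℝ≥0∞) {p q : ℝ} (hpq : Real.HolderConjugate p q) :
    (∑' i, f i * g i) ^ p ≤ (∑' i, f i ^ p) * ((∑' i, g i ^ q) ^ (p/q)) := by
  calc (∑' i, f i * g i) ^ p
      ≤ ((∑' i, f i ^ p) ^ (1/p) * (∑' i, g i ^ q) ^ (1/q)) ^ p :=
        ENNReal.rpow_le_rpow (holder_tsum f g hpq) hpq.nonneg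
    _ = (∑' i, f i ^ p) * ((∑' i, g i ^ q) ^ (p/q)) := by
        rw [ENNReal.mul_rpow_of_nonneg _ _ hpq.nonneg, ← ENNReal.rpow_mul, ← ENNReal.rpow_mul,
          one_div_mul_cancel hpq.ne_zero, ENNReal.rpow_one]
        congr 2
        field_simp


lemma lemmaH {n : ℕ} {p q : ℝ} (hpq : Real.HolderConjugate p q) {δ N : ℝ} (j : ℤ)
    (S : {j' : ℤ // j - 5 ≤ j'} → IVec n → ℝ≥0∞) :
    (∑' (j' : {j' : ℤ // j - 5 ≤ j'}) (w : IVec n), cwt N w * S j' w ^ (1/p)) ^ p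
      ≤ (Gam (δ*q/p) * Wsum n N) ^ (p/q) *
        ∑' (j' : {j' : ℤ // j - 5 ≤ j'}),
          ENNReal.ofReal ((2:ℝ) ^ (δ * (((j' : ℤ) : ℝ) - (j : ℝ)))) *
            ∑' w : IVec n, cwt N w * S j' w := by
  have hp0 : p ≠ 0 := hpq.ne_zero
  have h2 : (0:ℝ) < 2 := two_pos
  have hq0 : q ≠ 0 := hpq.symm.ne_zero
  set Δ : {j' : ℤ // j - 5 ≤ j'} → ℝ := fun j' => ((j' : ℤ) : ℝ) - (j : ℝ) with hΔ
  set ew : IVec n → ℝ := fun w => 1 + enorm2 (fun i => ((w i : ℤ):ℝ)) with hew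
  have hewpos : ∀ w, (0:ℝ) < ew w := by
    intro w
    have := enorm2_nonneg (fun i => ((w i : ℤ):ℝ))
    simp only [hew]; linarith
  have hNsum : N/p + N/q = N := by
    rw [show N/p + N/q = N*(p⁻¹ + q⁻¹) by ring, hpq.inv_add_inv_eq_one, mul_one]
  set f : ({j' : ℤ // j - 5 ≤ j'}) × IVec n → ℝ≥0∞ := fun i =>
    ENNReal.ofReal ((2:ℝ) ^ (δ * Δ i.1 / p) * ew i.2 ^ (-(N/p))) * S i.1 i.2 ^ (1/p) with hf
  set g : ({j' : ℤ // j - 5 ≤ j'}) × IVec n → ℝ≥0∞ := fun i =>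
    ENNReal.ofReal ((2:ℝ) ^ (-(δ * Δ i.1 / p)) * ew i.2 ^ (-(N/q))) with hg
  have hcwt : ∀ w, cwt (n := n) N w = ENNReal.ofReal (ew w ^ (-N)) := fun w => rfl
  -- step 0 : rewrite LHS base as ∑ f * g
  have step0 : (∑' (j' : {j' : ℤ // j - 5 ≤ j'}) (w : IVec n), cwt N w * S j' w ^ (1/p))
      = ∑' i : ({j' : ℤ // j - 5 ≤ j'}) × IVec n, f i * g i := by
    rw [ENNReal.tsum_prod' (f := fun i : ({j' : ℤ // j - 5 ≤ j'}) × IVec n => f i * g i)]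
    apply tsum_congr
    intro j'
    apply tsum_congr
    intro w
    refine Eq.symm ?_
    have hx : f (j', w) * g (j', w)
        = (ENNReal.ofReal ((2:ℝ) ^ (δ * Δ j' / p) * ew w ^ (-(N/p)))
            * ENNReal.ofReal ((2:ℝ) ^ (-(δ * Δ j' / p)) * ew w ^ (-(N/q))))
          * S j' w ^ (1/p) := by
      simp only [hf, hg]; ring
    rw [hx, ← ENNReal.ofReal_mul (mul_nonneg (Real.rpow_pos_of_pos h2 _).le (Real.rpow_pos_of_pos (hewpos w) _).le)]
    congr 2
    show _ = ew w ^ (-N)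
    have : (2:ℝ) ^ (δ * Δ j' / p) * ew w ^ (-(N/p)) *
        ((2:ℝ) ^ (-(δ * Δ j' / p)) * ew w ^ (-(N/q)))
        = ((2:ℝ) ^ (δ * Δ j' / p) * (2:ℝ) ^ (-(δ * Δ j' / p))) *
          (ew w ^ (-(N/p)) * ew w ^ (-(N/q))) := by ring
    rw [this, ← Real.rpow_add h2, ← Real.rpow_add (hewpos w)]
    rw [show δ * Δ j' / p + -(δ * Δ j' / p) = 0 by ring, Real.rpow_zero, one_mul]
    congr 1
    linarith [hNsum]
  -- step 2 : f^p
  have step2 : (∑' i : ({j' : ℤ // j - 5 ≤ j'}) × IVec n, f i ^ p)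
      = ∑' (j' : {j' : ℤ // j - 5 ≤ j'}), ENNReal.ofReal ((2:ℝ) ^ (δ * Δ j')) * ∑' w : IVec n, cwt N w * S j' w := by
    rw [ENNReal.tsum_prod']
    apply tsum_congr
    intro j'
    rw [← ENNReal.tsum_mul_left]
    apply tsum_congr
    intro w
    simp only [hf]
    rw [ENNReal.mul_rpow_of_nonneg _ _ hpq.nonneg, ← ENNReal.rpow_mul,
      one_div_mul_cancel hp0, ENNReal.rpow_one,
      ENNReal.ofReal_rpow_of_pos (mul_pos (Real.rpow_pos_of_pos h2 _) (Real.rpow_pos_of_pos (hewpos w) _)),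
      Real.mul_rpow (Real.rpow_pos_of_pos h2 _).le (Real.rpow_pos_of_pos (hewpos w) _).le,
      ← Real.rpow_mul (le_of_lt h2), ← Real.rpow_mul (le_of_lt (hewpos w)),
      div_mul_cancel₀ _ hp0, show (-(N/p)) * p = -N by rw [neg_mul, div_mul_cancel₀ _ hp0],
      ENNReal.ofReal_mul (Real.rpow_pos_of_pos h2 _).le, hcwt, mul_assoc]
  -- step 3 : g^q
  have step3 : (∑' i : ({j' : ℤ // j - 5 ≤ j'}) × IVec n, g i ^ q) = Gam (δ*q/p) * Wsum n N := by
    have hgq : ∀ i : ({j' : ℤ // j - 5 ≤ j'}) × IVec n, g i ^ q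
        = ENNReal.ofReal ((2:ℝ) ^ (-((δ*q/p) * Δ i.1))) * cwt N i.2 := by
      rintro ⟨j', w⟩
      simp only [hg]
      rw [ENNReal.ofReal_rpow_of_pos (mul_pos (Real.rpow_pos_of_pos h2 _) (Real.rpow_pos_of_pos (hewpos w) _)),
        Real.mul_rpow (Real.rpow_pos_of_pos h2 _).le (Real.rpow_pos_of_pos (hewpos w) _).le,
        ← Real.rpow_mul (le_of_lt h2), ← Real.rpow_mul (le_of_lt (hewpos w)),
        show (-(δ * Δ j' / p)) * q = -((δ*q/p) * Δ j') by ring,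
        show (-(N/q)) * q = -N by rw [neg_mul, div_mul_cancel₀ _ hq0],
        ENNReal.ofReal_mul (Real.rpow_pos_of_pos h2 _).le, hcwt]
    rw [tsum_congr hgq, ENNReal.tsum_prod']
    calc ∑' (j' : {j' : ℤ // j - 5 ≤ j'}) (w : IVec n), ENNReal.ofReal ((2:ℝ) ^ (-((δ*q/p) * Δ j'))) * cwt N w
        = ∑' (j' : {j' : ℤ // j - 5 ≤ j'}), ENNReal.ofReal ((2:ℝ) ^ (-((δ*q/p) * Δ j'))) * Wsum n N := by
          apply tsum_congr; intro j'; rw [ENNReal.tsum_mul_left]; rfl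
      _ = (∑' (j' : {j' : ℤ // j - 5 ≤ j'}), ENNReal.ofReal ((2:ℝ) ^ (-((δ*q/p) * Δ j')))) * Wsum n N := by
          rw [ENNReal.tsum_mul_right]
      _ = Gam (δ*q/p) * Wsum n N := by rw [geoEq]
  calc (∑' (j' : {j' : ℤ // j - 5 ≤ j'}) (w : IVec n), cwt N w * S j' w ^ (1/p)) ^ p
      = (∑' i : ({j' : ℤ // j - 5 ≤ j'}) × IVec n, f i * g i) ^ p := by rw [step0]
    _ ≤ (∑' i : ({j' : ℤ // j - 5 ≤ j'}) × IVec n, f i ^ p) * ((∑' i : ({j' : ℤ // j - 5 ≤ j'}) × IVec n, g i ^ q) ^ (p/q)) :=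
        holder_pow f g hpq
    _ = (Gam (δ*q/p) * Wsum n N) ^ (p/q) *
          ∑' (j' : {j' : ℤ // j - 5 ≤ j'}), ENNReal.ofReal ((2:ℝ) ^ (δ * Δ j')) * ∑' w : IVec n, cwt N w * S j' w := by
        rw [step2, step3, mul_comm]

def wEquiv (n : ℕ) (D : ℤ) (b : IVec n) :
    (Σ w : IVec n, {k' : IVec n // ∀ i, k' i / D = b i + w i}) ≃ IVec n where
  toFun σ := σ.2.val
  invFun k' := ⟨fun i => k' i / D - b i, ⟨k', fun i => by ring⟩⟩
  left_inv := by
    rintro ⟨w, k', hk⟩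
    have hw : w = fun i => k' i / D - b i := funext fun i => by have := hk i; omega
    subst hw
    rfl
  right_inv k' := rfl

lemma collapse {n : ℕ} (D : ℤ) (b : IVec n) (c G : IVec n → ℝ≥0∞) :
    ∑' w : IVec n, c w * ∑' (k' : {k' : IVec n // ∀ i, k' i / D = b i + w i}), G k'.val
      = ∑' k' : IVec n, c (fun i => k' i / D - b i) * G k' := by
  calc ∑' w : IVec n, c w * ∑' (k' : {k' : IVec n // ∀ i, k' i / D = b i + w i}), G k'.val
      = ∑' (w : IVec n) (k' : {k' : IVec n // ∀ i, k' i / D = b i + w i}), c w * G k'.val := by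
        apply tsum_congr; intro w; rw [ENNReal.tsum_mul_left]
    _ = ∑' σ : (Σ w : IVec n, {k' : IVec n // ∀ i, k' i / D = b i + w i}), c σ.1 * G σ.2.val :=
        (ENNReal.tsum_sigma' (fun σ : (Σ w : IVec n, {k' : IVec n // ∀ i, k' i / D = b i + w i}) =>
          c σ.1 * G σ.2.val)).symm
    _ = ∑' k' : IVec n, c (fun i => k' i / D - b i) * G k' := by
        rw [← (wEquiv n D b).tsum_eq (fun k' => c (fun i => k' i / D - b i) * G k')]
        apply tsum_congr
        rintro ⟨w, k', hk⟩
        have hw : (fun i => k' i / D - b i) = w := funext fun i => by have := hk i; omega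
        show c w * G k' = c (fun i => k' i / D - b i) * G k'
        rw [hw]

lemma boxBound {n : ℕ} {N : ℝ} (hn : 1 ≤ n) (hN : (n:ℝ) < N) (S : ℕ) (hS : 1 ≤ S)
    (w'' : IVec n) :
    ∑' v : (Fin n → Fin (2*S - 1)), cwt N (fun i => (S:ℤ) * w'' i - ((S:ℤ) - 1) + (v i : ℤ))
      ≤ (Wsum n N * (ENNReal.ofReal ((1 + Real.sqrt n) ^ (-N)))⁻¹
          + ENNReal.ofReal ((2:ℝ)^n * (4*Real.sqrt n)^N)) * cwt N w'' := by
  have hNpos : (0:ℝ) < N := lt_of_le_of_lt (by exact_mod_cast Nat.zero_le n) hN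
  have hsq1 : (1:ℝ) ≤ Real.sqrt n := by
    rw [show (1:ℝ) = Real.sqrt 1 by simp]
    exact Real.sqrt_le_sqrt (by exact_mod_cast hn)
  have hsqpos : (0:ℝ) < Real.sqrt n := by linarith
  have hS1 : (1:ℝ) ≤ (S:ℝ) := by exact_mod_cast hS
  have hSZ : (1:ℤ) ≤ (S:ℤ) := by exact_mod_cast hS
  set g : (Fin n → Fin (2*S - 1)) → IVec n :=
    fun v => (fun i => (S:ℤ) * w'' i - ((S:ℤ) - 1) + (v i : ℤ)) with hgdef
  have hewpos : ∀ u : IVec n, (0:ℝ) < 1 + enorm2 (fun i => ((u i : ℤ):ℝ)) := by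
    intro u; have := enorm2_nonneg (fun i => ((u i : ℤ):ℝ)); linarith
  by_cases hcase : ∀ i, |w'' i| ≤ 1
  -- CASE A : w'' small
  · have hginj : Function.Injective g := by
      intro v v' h
      funext i
      have h2 := congrFun h i
      simp only [hgdef] at h2
      have hvv : ((v i : ℕ) : ℤ) = ((v' i : ℕ) : ℤ) := add_left_cancel h2
      exact Fin.ext (by exact_mod_cast hvv)
    have h1 : ∑' v : (Fin n → Fin (2*S - 1)), cwt N (g v) ≤ Wsum n N :=
      ENNReal.tsum_comp_le_tsum_of_injective hginj (cwt N)
    have hβ : ENNReal.ofReal ((1 + Real.sqrt n) ^ (-N)) ≤ cwt N w'' := by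
      show _ ≤ ENNReal.ofReal ((1 + enorm2 (fun i => ((w'' i : ℤ):ℝ))) ^ (-N))
      apply ENNReal.ofReal_le_ofReal
      apply Real.rpow_le_rpow_of_nonpos (hewpos w'') _ (by linarith)
      have hb : enorm2 (fun i => ((w'' i : ℤ):ℝ)) ≤ Real.sqrt n * 1 := by
        apply enorm2_le_sqrt_card_mul _ _ zero_le_one
        intro i
        have h1 : |w'' i| ≤ 1 := hcase i
        have h2 : |((w'' i : ℤ):ℝ)| ≤ 1 := by rw [← Int.cast_abs]; exact_mod_cast h1
        simpa using h2
      linarith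
    have hβ0 : ENNReal.ofReal ((1 + Real.sqrt n) ^ (-N)) ≠ 0 := by
      simp only [ne_eq, ENNReal.ofReal_eq_zero, not_le]
      positivity
    have hβt : ENNReal.ofReal ((1 + Real.sqrt n) ^ (-N)) ≠ ⊤ := ENNReal.ofReal_ne_top
    calc ∑' v : (Fin n → Fin (2*S - 1)), cwt N (g v) ≤ Wsum n N := h1
      _ = Wsum n N * (ENNReal.ofReal ((1 + Real.sqrt n) ^ (-N)))⁻¹ *
            ENNReal.ofReal ((1 + Real.sqrt n) ^ (-N)) := by
          rw [mul_assoc, ENNReal.inv_mul_cancel hβ0 hβt, mul_one]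
      _ ≤ Wsum n N * (ENNReal.ofReal ((1 + Real.sqrt n) ^ (-N)))⁻¹ * cwt N w'' :=
          mul_le_mul_right hβ _
      _ ≤ (Wsum n N * (ENNReal.ofReal ((1 + Real.sqrt n) ^ (-N)))⁻¹
            + ENNReal.ofReal ((2:ℝ)^n * (4*Real.sqrt n)^N)) * cwt N w'' :=
          mul_le_mul_left le_self_add _
  -- CASE B : some coordinate at least 2
  · push_neg at hcase
    haveI hne : Nonempty (Fin n) := ⟨⟨0, hn⟩⟩
    obtain ⟨i₀, -, hmax⟩ := Finset.exists_max_image Finset.univ (fun i => |w'' i|)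
      Finset.univ_nonempty
    have hm2 : 2 ≤ |w'' i₀| := by
      obtain ⟨i, hi⟩ := hcase
      have h := lt_of_lt_of_le hi (hmax i (Finset.mem_univ i))
      linarith
    set m : ℝ := |((w'' i₀ : ℤ):ℝ)| with hmdef
    have hm2R : (2:ℝ) ≤ m := by
      rw [hmdef, ← Int.cast_abs]; exact_mod_cast hm2
    have hint : ∀ v : (Fin n → Fin (2*S - 1)), (S:ℤ) * |w'' i₀| ≤ 2 * |g v i₀| := by
      intro v
      have hval : ((v i₀ : ℤ)) = ((v i₀ : ℕ) : ℤ) := rfl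
      have hlt : (v i₀ : ℕ) < 2*S-1 := (v i₀).isLt
      have hv0 : (0:ℤ) ≤ (v i₀ : ℤ) := by omega
      have hv1 : (v i₀ : ℤ) ≤ 2*(S:ℤ) - 2 := by omega
      simp only [hgdef]
      rcases le_or_gt 0 (w'' i₀) with hw | hw
      · have hw2 : 2 ≤ w'' i₀ := by rw [abs_of_nonneg hw] at hm2; exact hm2
        have hSw : (S:ℤ)*2 ≤ (S:ℤ)*(w'' i₀) :=
          mul_le_mul_of_nonneg_left hw2 (by linarith)
        rw [abs_of_nonneg hw]
        have hterm : 0 ≤ (S:ℤ) * w'' i₀ - ((S:ℤ) - 1) + (v i₀ : ℤ) := by linarith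
        rw [abs_of_nonneg hterm]
        linarith
      · have hw2 : w'' i₀ ≤ -2 := by rw [abs_of_neg hw] at hm2; linarith
        have hSw : (S:ℤ)*(w'' i₀) ≤ (S:ℤ)*(-2) :=
          mul_le_mul_of_nonneg_left hw2 (by linarith)
        rw [abs_of_neg hw]
        have hterm : (S:ℤ) * w'' i₀ - ((S:ℤ) - 1) + (v i₀ : ℤ) < 0 := by linarith
        rw [abs_of_neg hterm]
        linarith
    have hpoint : ∀ v : (Fin n → Fin (2*S - 1)),
        cwt N (g v) ≤ ENNReal.ofReal (((S:ℝ)/(4*Real.sqrt n)) ^ (-N)) * cwt N w'' := by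
      intro v
      show ENNReal.ofReal ((1 + enorm2 (fun i => ((g v i : ℤ):ℝ))) ^ (-N)) ≤
        ENNReal.ofReal (((S:ℝ)/(4*Real.sqrt n)) ^ (-N)) *
          ENNReal.ofReal ((1 + enorm2 (fun i => ((w'' i : ℤ):ℝ))) ^ (-N))
      rw [← ENNReal.ofReal_mul (by positivity)]
      apply ENNReal.ofReal_le_ofReal
      have hqpos : (0:ℝ) < (S:ℝ)/(4*Real.sqrt n) := by positivity
      have key : ((S:ℝ)/(4*Real.sqrt n)) * (1 + enorm2 (fun i => ((w'' i : ℤ):ℝ)))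
          ≤ 1 + enorm2 (fun i => ((g v i : ℤ):ℝ)) := by
        have h4 : (0:ℝ) < 4*Real.sqrt n := by positivity
        rw [div_mul_eq_mul_div, div_le_iff₀ h4]
        set e'' : ℝ := enorm2 (fun i => ((w'' i : ℤ):ℝ)) with he''
        set egv : ℝ := enorm2 (fun i => ((g v i : ℤ):ℝ)) with hegv
        have he''0 : 0 ≤ e'' := enorm2_nonneg _
        have hegv0 : 0 ≤ egv := enorm2_nonneg _
        have he''m : e'' ≤ Real.sqrt n * m := by
          apply enorm2_le_sqrt_card_mul _ _ (by positivity)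
          intro i
          have h1 : |w'' i| ≤ |w'' i₀| := hmax i (Finset.mem_univ i)
          show |((w'' i : ℤ):ℝ)| ≤ m
          rw [hmdef, ← Int.cast_abs, ← Int.cast_abs]
          exact_mod_cast h1
        have habs : |((g v i₀ : ℤ):ℝ)| ≤ egv := by
          have h := abs_le_enorm2 (fun i => ((g v i : ℤ):ℝ)) i₀
          simpa only [← hegv] using h
        have hsm : (S:ℝ) * m ≤ 2 * |((g v i₀ : ℤ):ℝ)| := by
          rw [hmdef, ← Int.cast_abs, ← Int.cast_abs]
          exact_mod_cast hint v
        have h1 : (S:ℝ)*m ≤ 2*egv := by linarith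
        have h2S : 2*(S:ℝ) ≤ (S:ℝ)*m := by nlinarith
        have h2 : (S:ℝ)*e'' ≤ Real.sqrt n * ((S:ℝ)*m) := by
          have := mul_le_mul_of_nonneg_left he''m (by linarith : (0:ℝ) ≤ (S:ℝ))
          nlinarith
        have h3 : Real.sqrt n * ((S:ℝ)*m) ≤ Real.sqrt n * (2*egv) :=
          mul_le_mul_of_nonneg_left h1 (by positivity)
        have h5 : egv ≤ Real.sqrt n * egv := by nlinarith
        nlinarith
      calc (1 + enorm2 (fun i => ((g v i : ℤ):ℝ))) ^ (-N)
          ≤ (((S:ℝ)/(4*Real.sqrt n)) * (1 + enorm2 (fun i => ((w'' i : ℤ):ℝ)))) ^ (-N) := by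
            exact Real.rpow_le_rpow_of_nonpos (mul_pos hqpos (hewpos w'')) key (by linarith)
        _ = ((S:ℝ)/(4*Real.sqrt n)) ^ (-N) * (1 + enorm2 (fun i => ((w'' i : ℤ):ℝ))) ^ (-N) :=
            Real.mul_rpow (le_of_lt hqpos) (le_of_lt (hewpos w''))
    have hcard : ∑' _v : (Fin n → Fin (2*S - 1)),
        (ENNReal.ofReal (((S:ℝ)/(4*Real.sqrt n)) ^ (-N)) * cwt N w'')
        = (((2*S-1)^n : ℕ) : ℝ≥0∞) * (ENNReal.ofReal (((S:ℝ)/(4*Real.sqrt n)) ^ (-N)) * cwt N w'') := by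
      rw [tsum_fintype, Finset.sum_const, Finset.card_univ, Fintype.card_fun, Fintype.card_fin,
        Fintype.card_fin, nsmul_eq_mul]
    have hconst : (((2*S-1)^n : ℕ) : ℝ≥0∞) * ENNReal.ofReal (((S:ℝ)/(4*Real.sqrt n)) ^ (-N))
        ≤ ENNReal.ofReal ((2:ℝ)^n * (4*Real.sqrt n)^N) := by
      have hSpos : (0:ℝ) < (S:ℝ) := by linarith
      have hq : (((S:ℝ)/(4*Real.sqrt n)) ^ (-N)) = (S:ℝ)^(-N) * (4*Real.sqrt n)^N := by
        rw [Real.div_rpow (by positivity) (by positivity),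
          Real.rpow_neg (by positivity : (0:ℝ) ≤ 4*Real.sqrt n), div_eq_mul_inv, inv_inv]
      have hcast : (((2*S-1)^n : ℕ) : ℝ≥0∞) = ENNReal.ofReal ((((2*S-1):ℕ) : ℝ)^n) := by
        rw [← ENNReal.ofReal_natCast ((2*S-1)^n)]
        congr 1
        push_cast
        ring
      rw [hcast, ← ENNReal.ofReal_mul (by positivity)]
      apply ENNReal.ofReal_le_ofReal
      rw [hq]
      have hsub : (((2*S-1):ℕ) : ℝ) = 2*(S:ℝ) - 1 := by
        rw [Nat.cast_sub (by omega)]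
        push_cast
        ring
      have a1 : (((2*S-1):ℕ) : ℝ)^n ≤ (2*(S:ℝ))^n := by
        apply pow_le_pow_left₀ (by rw [hsub]; linarith) (by rw [hsub]; linarith)
      have a4 : (S:ℝ)^n * (S:ℝ)^(-N) ≤ 1 := by
        rw [← Real.rpow_natCast (S:ℝ) n, ← Real.rpow_add hSpos]
        apply Real.rpow_le_one_of_one_le_of_nonpos hS1 (by linarith)
      calc (((2*S-1):ℕ) : ℝ)^n * ((S:ℝ)^(-N) * (4*Real.sqrt n)^N)
          ≤ (2*(S:ℝ))^n * ((S:ℝ)^(-N) * (4*Real.sqrt n)^N) :=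
            mul_le_mul_of_nonneg_right a1 (by positivity)
        _ = 2^n * ((S:ℝ)^n * (S:ℝ)^(-N)) * (4*Real.sqrt n)^N := by rw [mul_pow]; ring
        _ ≤ 2^n * 1 * (4*Real.sqrt n)^N := by
            apply mul_le_mul_of_nonneg_right _ (by positivity)
            exact mul_le_mul_of_nonneg_left a4 (by positivity)
        _ = (2:ℝ)^n * (4*Real.sqrt n)^N := by ring
    calc ∑' v : (Fin n → Fin (2*S - 1)), cwt N (g v)
        ≤ ∑' _v : (Fin n → Fin (2*S - 1)),
            (ENNReal.ofReal (((S:ℝ)/(4*Real.sqrt n)) ^ (-N)) * cwt N w'') :=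
          ENNReal.tsum_le_tsum hpoint
      _ = (((2*S-1)^n : ℕ) : ℝ≥0∞) * (ENNReal.ofReal (((S:ℝ)/(4*Real.sqrt n)) ^ (-N)) * cwt N w'') :=
          hcard
      _ = ((((2*S-1)^n : ℕ) : ℝ≥0∞) * ENNReal.ofReal (((S:ℝ)/(4*Real.sqrt n)) ^ (-N))) * cwt N w'' := by
          ring
      _ ≤ ENNReal.ofReal ((2:ℝ)^n * (4*Real.sqrt n)^N) * cwt N w'' :=
          mul_le_mul_left hconst _
      _ ≤ (Wsum n N * (ENNReal.ofReal ((1 + Real.sqrt n) ^ (-N)))⁻¹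
            + ENNReal.ofReal ((2:ℝ)^n * (4*Real.sqrt n)^N)) * cwt N w'' :=
          mul_le_mul_left le_add_self _

lemma keyLemma {n : ℕ} {N : ℝ} (hn : 1 ≤ n) (hN : (n:ℝ) < N) (S : ℕ) (hS : 1 ≤ S)
    (A k₀ : IVec n) :
    ∑' (k : {k : IVec n // ∀ i, k i / (S:ℤ) = k₀ i}), cwt N (fun i => A i - k.val i / 256)
      ≤ (256:ℝ≥0∞)^n * ((Wsum n N * (ENNReal.ofReal ((1 + Real.sqrt n) ^ (-N)))⁻¹
          + ENNReal.ofReal ((2:ℝ)^n * (4*Real.sqrt n)^N)) *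
            cwt N (fun i => A i / (S:ℤ) - k₀ i / 256)) := by
  have hs : (0:ℤ) < (S:ℤ) := by exact_mod_cast hS
  set s : ℤ := (S:ℤ) with hsdef
  set w'' : IVec n := fun i => A i / s - k₀ i / 256 with hw''
  have hbox : ∀ (k : {k : IVec n // ∀ i, k i / (S:ℤ) = k₀ i}) (i : Fin n),
      s * w'' i - (s-1) ≤ A i - k.val i / 256 ∧ A i - k.val i / 256 ≤ s * w'' i + (s - 1) := by
    rintro ⟨k, hk⟩ i
    have hkb := (aux_ediv_eq_iff hs).1 (hk i)
    have hB := aux_ediv_bounds (x := k i) (show (0:ℤ) < 256 by norm_num)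
    have hB'' := aux_ediv_bounds (x := k₀ i) (show (0:ℤ) < 256 by norm_num)
    have hA'' := aux_ediv_bounds (x := A i) hs
    have hsw : s * w'' i = s * (A i / s) - s * (k₀ i / 256) := by
      rw [hw'']; simp only; ring
    have hs0 : (0:ℤ) ≤ s := le_of_lt hs
    -- goal1 : s * (k₀ i / 256) ≤ k i / 256
    have e1 : s*((k₀ i/256)*256) ≤ s*(k₀ i) := mul_le_mul_of_nonneg_left hB''.1 hs0
    have goal1 : s * (k₀ i / 256) ≤ k i / 256 := by
      have h256 : s * (k₀ i / 256) < k i / 256 + 1 := by linarith [hkb.1, hB.2]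
      linarith [Int.lt_add_one_iff.mp h256]
    -- goal2 : k i / 256 < s * (k₀ i / 256 + 1)
    have e2 : s*(k₀ i + 1) ≤ s*((k₀ i/256 + 1)*256) :=
      mul_le_mul_of_nonneg_left (by linarith [hB''.2]) hs0
    have goal2 : k i / 256 < s * (k₀ i / 256 + 1) := by
      linarith [hB.1, hkb.2]
    constructor
    · rw [hsw]; linarith [hA''.1, hA''.2]
    · rw [hsw]; linarith [hA''.1, hA''.2]
  set Φ : {k : IVec n // ∀ i, k i / (S:ℤ) = k₀ i} → (Fin n → Fin 256) × (Fin n → Fin (2*S-1)) :=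
    fun k => (fun i => ⟨(k.val i % 256).toNat, by
        have h1 : 0 ≤ k.val i % 256 := Int.emod_nonneg _ (by norm_num)
        have h2 : k.val i % 256 < 256 := Int.emod_lt_of_pos _ (by norm_num)
        omega⟩,
      fun i => ⟨((A i - k.val i / 256) - (s * w'' i - (s-1))).toNat, by
        have h0 := (hbox k i).1
        have h1 := (hbox k i).2
        have hb0 : 0 ≤ (A i - k.val i / 256) - (s * w'' i - (s-1)) := by linarith
        have hb1 : (A i - k.val i / 256) - (s * w'' i - (s-1)) ≤ 2*s - 2 := by linarith
        have := hS
        omega⟩) with hΦ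
  have hΦinj : Function.Injective Φ := by
    intro k k' h
    apply Subtype.ext
    funext i
    have h1 : ((k.val i % 256).toNat : ℤ) = ((k'.val i % 256).toNat : ℤ) := by
      have := congrArg Fin.val (congrFun (congrArg Prod.fst h) i)
      exact_mod_cast this
    have hm1 : 0 ≤ k.val i % 256 := Int.emod_nonneg _ (by norm_num)
    have hm2 : 0 ≤ k'.val i % 256 := Int.emod_nonneg _ (by norm_num)
    have hmod : k.val i % 256 = k'.val i % 256 := by
      rw [Int.toNat_of_nonneg hm1, Int.toNat_of_nonneg hm2] at h1
      exact h1
    have h2 : ((((A i - k.val i / 256) - (s * w'' i - (s-1))).toNat) : ℤ)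
        = ((((A i - k'.val i / 256) - (s * w'' i - (s-1))).toNat) : ℤ) := by
      have := congrArg Fin.val (congrFun (congrArg Prod.snd h) i)
      exact_mod_cast this
    have hd0 : 0 ≤ (A i - k.val i / 256) - (s * w'' i - (s-1)) := by linarith [(hbox k i).1]
    have hd0' : 0 ≤ (A i - k'.val i / 256) - (s * w'' i - (s-1)) := by linarith [(hbox k' i).1]
    rw [Int.toNat_of_nonneg hd0, Int.toNat_of_nonneg hd0'] at h2
    have hdiv : k.val i / 256 = k'.val i / 256 := by linarith
    omega
  set F : (Fin n → Fin 256) × (Fin n → Fin (2*S-1)) → ℝ≥0∞ :=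
    fun rv => cwt N (fun i => (S:ℤ) * w'' i - ((S:ℤ)-1) + (rv.2 i : ℤ)) with hF
  have hFΦ : ∀ k, F (Φ k) = cwt N (fun i => A i - k.val i / 256) := by
    intro k
    simp only [hF, hΦ]
    congr 1
    funext i
    have hd0 : 0 ≤ (A i - k.val i / 256) - (s * w'' i - (s-1)) := by linarith [(hbox k i).1]
    push_cast [Int.toNat_of_nonneg hd0]
    ring
  calc ∑' (k : {k : IVec n // ∀ i, k i / (S:ℤ) = k₀ i}), cwt N (fun i => A i - k.val i / 256)
      = ∑' (k : {k : IVec n // ∀ i, k i / (S:ℤ) = k₀ i}), F (Φ k) := by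
        apply tsum_congr; intro k; rw [hFΦ]
    _ ≤ ∑' rv : (Fin n → Fin 256) × (Fin n → Fin (2*S-1)), F rv :=
        ENNReal.tsum_comp_le_tsum_of_injective hΦinj F
    _ = ∑' (_r : Fin n → Fin 256) (v : Fin n → Fin (2*S-1)),
          cwt N (fun i => (S:ℤ) * w'' i - ((S:ℤ)-1) + (v i : ℤ)) := ENNReal.tsum_prod'
    _ = ((Fintype.card (Fin n → Fin 256)) : ℝ≥0∞) *
          ∑' v : (Fin n → Fin (2*S-1)), cwt N (fun i => (S:ℤ) * w'' i - ((S:ℤ)-1) + (v i : ℤ)) := by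
        rw [tsum_fintype, Finset.sum_const, Finset.card_univ, nsmul_eq_mul]
    _ ≤ ((Fintype.card (Fin n → Fin 256)) : ℝ≥0∞) *
          ((Wsum n N * (ENNReal.ofReal ((1 + Real.sqrt n) ^ (-N)))⁻¹
          + ENNReal.ofReal ((2:ℝ)^n * (4*Real.sqrt n)^N)) * cwt N w'') :=
        mul_le_mul_right (boxBound hn hN S hS w'') _
    _ = (256:ℝ≥0∞)^n * ((Wsum n N * (ENNReal.ofReal ((1 + Real.sqrt n) ^ (-N)))⁻¹
          + ENNReal.ofReal ((2:ℝ)^n * (4*Real.sqrt n)^N)) * cwt N w'') := by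
        congr 1
        rw [Fintype.card_fun, Fintype.card_fin, Fintype.card_fin]
        push_cast
        ring

/-- The constant in the counting step. -/
def CC (n : ℕ) (N : ℝ) : ℝ≥0∞ :=
  (256:ℝ≥0∞)^n * (Wsum n N * (ENNReal.ofReal ((1 + Real.sqrt n) ^ (-N)))⁻¹
          + ENNReal.ofReal ((2:ℝ)^n * (4*Real.sqrt n)^N))

lemma CC_ne_top {n : ℕ} {N : ℝ} (hn : 1 ≤ n) (hN : (n:ℝ) < N) : CC n N ≠ ⊤ := by
  have h1 : (256:ℝ≥0∞)^n ≠ ⊤ := by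
    apply ENNReal.pow_ne_top
    norm_num
  apply ENNReal.mul_ne_top h1
  apply ENNReal.add_ne_top.2
  constructor
  · apply ENNReal.mul_ne_top (Wsum_lt_top hn hN).ne
    rw [ne_eq, ENNReal.inv_eq_top]
    simp only [ENNReal.ofReal_eq_zero, not_le]
    have hsq : (0:ℝ) < Real.sqrt n := Real.sqrt_pos.2 (by exact_mod_cast hn)
    positivity
  · exact ENNReal.ofReal_ne_top

lemma perJ {n : ℕ} {N : ℝ} (hn : 1 ≤ n) (hN : (n:ℝ) < N)
    (j₀ j j' : ℤ) (hj : j₀ ≤ j) (hj' : j - 5 ≤ j') (k₀ : IVec n) (G : IVec n → ℝ≥0∞) :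
    ∑' (k : {k : IVec n // dyadicCube n j k ⊆ dyadicCube n j₀ k₀}),
      ∑' (w : IVec n), cwt N w *
        ∑' (k' : {k' : IVec n // dyadicCube n j' k' ⊆ QW n j k.val w}), G k'.val
      ≤ CC n N *
        ∑' (w : IVec n), cwt N w *
          ∑' (k' : {k' : IVec n // dyadicCube n j' k' ⊆ QW n j₀ k₀ w}), G k'.val := by
  set t : ℕ := (j - j₀).toNat with ht
  set S : ℕ := 2^t with hSdef
  have hS : 1 ≤ S := Nat.one_le_two_pow
  have hSZ : ((S:ℤ)) = (2:ℤ)^t := by rw [hSdef]; push_cast; ring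
  set e₁ : ℕ := (j' - (j - 8)).toNat with he₁
  set e₀ : ℕ := (j' - (j₀ - 8)).toNat with he₀
  have hee : e₀ = e₁ + t := by rw [he₀, he₁, ht]; omega
  set D₁ : ℤ := (2:ℤ)^e₁ with hD₁
  set D₀ : ℤ := (2:ℤ)^e₀ with hD₀
  have hD₁pos : (0:ℤ) < D₁ := by positivity
  have hDD : D₀ = D₁ * (S:ℤ) := by rw [hD₀, hD₁, hSZ, hee, pow_add]
  -- subset conditions as arithmetic
  have hsubQW : ∀ (kk : IVec n) (w : IVec n) (k' : IVec n),
      (dyadicCube n j' k' ⊆ QW n j kk w) ↔ (∀ i, k' i / D₁ = kk i / 256 + w i) := by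
    intro kk w k'
    rw [show QW n j kk w = dyadicCube n (j - 8) (fun i => Int.fdiv (kk i) 256 + w i) from rfl,
      cube_subset_iff n (by omega) k' _]
    constructor
    · intro h i
      have := h i
      rwa [Int.fdiv_eq_ediv_of_nonneg _ (by norm_num)] at this
    · intro h i
      rw [Int.fdiv_eq_ediv_of_nonneg _ (by norm_num)]
      exact h i
  have hsubQW₀ : ∀ (w : IVec n) (k' : IVec n),
      (dyadicCube n j' k' ⊆ QW n j₀ k₀ w) ↔ (∀ i, k' i / D₀ = k₀ i / 256 + w i) := by
    intro w k'
    rw [show QW n j₀ k₀ w = dyadicCube n (j₀ - 8) (fun i => Int.fdiv (k₀ i) 256 + w i) from rfl,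
      cube_subset_iff n (by omega) k' _]
    constructor
    · intro h i
      have := h i
      rwa [Int.fdiv_eq_ediv_of_nonneg _ (by norm_num)] at this
    · intro h i
      rw [Int.fdiv_eq_ediv_of_nonneg _ (by norm_num)]
      exact h i
  have hsubK : ∀ k : IVec n,
      (dyadicCube n j k ⊆ dyadicCube n j₀ k₀) ↔ (∀ i, k i / (S:ℤ) = k₀ i) := by
    intro k
    rw [cube_subset_iff n hj k k₀, ← hSZ]
  -- rewrite inner sums
  have step1 : ∀ (k : {k : IVec n // dyadicCube n j k ⊆ dyadicCube n j₀ k₀}),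
      ∑' (w : IVec n), cwt N w *
        ∑' (k' : {k' : IVec n // dyadicCube n j' k' ⊆ QW n j k.val w}), G k'.val
      = ∑' k' : IVec n, cwt N (fun i => k' i / D₁ - k.val i / 256) * G k' := by
    intro k
    have h1 : ∀ w : IVec n,
        (∑' (k' : {k' : IVec n // dyadicCube n j' k' ⊆ QW n j k.val w}), G k'.val)
        = ∑' (k' : {k' : IVec n // ∀ i, k' i / D₁ = k.val i / 256 + w i}), G k'.val := by
      intro w
      exact (Equiv.subtypeEquivRight (fun k' => hsubQW k.val w k')).tsum_eq
        (fun k' : {k' : IVec n // ∀ i, k' i / D₁ = k.val i / 256 + w i} => G k'.val)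
    calc ∑' (w : IVec n), cwt N w *
          ∑' (k' : {k' : IVec n // dyadicCube n j' k' ⊆ QW n j k.val w}), G k'.val
        = ∑' (w : IVec n), cwt N w *
          ∑' (k' : {k' : IVec n // ∀ i, k' i / D₁ = k.val i / 256 + w i}), G k'.val := by
          apply tsum_congr; intro w; rw [h1 w]
      _ = ∑' k' : IVec n, cwt N (fun i => k' i / D₁ - k.val i / 256) * G k' :=
          collapse D₁ (fun i => k.val i / 256) (cwt N) G
  have step2 :
      (∑' (w : IVec n), cwt N w *
        ∑' (k' : {k' : IVec n // dyadicCube n j' k' ⊆ QW n j₀ k₀ w}), G k'.val)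
      = ∑' k' : IVec n, cwt N (fun i => k' i / D₀ - k₀ i / 256) * G k' := by
    have h1 : ∀ w : IVec n,
        (∑' (k' : {k' : IVec n // dyadicCube n j' k' ⊆ QW n j₀ k₀ w}), G k'.val)
        = ∑' (k' : {k' : IVec n // ∀ i, k' i / D₀ = k₀ i / 256 + w i}), G k'.val := by
      intro w
      exact (Equiv.subtypeEquivRight (fun k' => hsubQW₀ w k')).tsum_eq
        (fun k' : {k' : IVec n // ∀ i, k' i / D₀ = k₀ i / 256 + w i} => G k'.val)
    calc ∑' (w : IVec n), cwt N w *
          ∑' (k' : {k' : IVec n // dyadicCube n j' k' ⊆ QW n j₀ k₀ w}), G k'.val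
        = ∑' (w : IVec n), cwt N w *
          ∑' (k' : {k' : IVec n // ∀ i, k' i / D₀ = k₀ i / 256 + w i}), G k'.val := by
          apply tsum_congr; intro w; rw [h1 w]
      _ = ∑' k' : IVec n, cwt N (fun i => k' i / D₀ - k₀ i / 256) * G k' :=
          collapse D₀ (fun i => k₀ i / 256) (cwt N) G
  -- transport the outer subtype
  have step3 :
      (∑' (k : {k : IVec n // dyadicCube n j k ⊆ dyadicCube n j₀ k₀}),
        ∑' k' : IVec n, cwt N (fun i => k' i / D₁ - k.val i / 256) * G k')
      = ∑' (k : {k : IVec n // ∀ i, k i / (S:ℤ) = k₀ i}),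
        ∑' k' : IVec n, cwt N (fun i => k' i / D₁ - k.val i / 256) * G k' :=
    ((Equiv.subtypeEquivRight hsubK).tsum_eq
      (fun k : {k : IVec n // ∀ i, k i / (S:ℤ) = k₀ i} =>
        ∑' k' : IVec n, cwt N (fun i => k' i / D₁ - k.val i / 256) * G k'))
  -- main chain
  calc ∑' (k : {k : IVec n // dyadicCube n j k ⊆ dyadicCube n j₀ k₀}),
        ∑' (w : IVec n), cwt N w *
          ∑' (k' : {k' : IVec n // dyadicCube n j' k' ⊆ QW n j k.val w}), G k'.val
      = ∑' (k : {k : IVec n // ∀ i, k i / (S:ℤ) = k₀ i}),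
        ∑' k' : IVec n, cwt N (fun i => k' i / D₁ - k.val i / 256) * G k' := by
        rw [← step3]; exact tsum_congr step1
    _ = ∑' (k' : IVec n), ∑' (k : {k : IVec n // ∀ i, k i / (S:ℤ) = k₀ i}),
          cwt N (fun i => k' i / D₁ - k.val i / 256) * G k' := ENNReal.tsum_comm
    _ = ∑' (k' : IVec n),
          (∑' (k : {k : IVec n // ∀ i, k i / (S:ℤ) = k₀ i}),
            cwt N (fun i => k' i / D₁ - k.val i / 256)) * G k' := by
        apply tsum_congr; intro k'; rw [ENNReal.tsum_mul_right]
    _ ≤ ∑' (k' : IVec n), (CC n N * cwt N (fun i => k' i / D₀ - k₀ i / 256)) * G k' := by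
        apply ENNReal.tsum_le_tsum
        intro k'
        apply mul_le_mul_left
        have hk := keyLemma hn hN S hS (fun i => k' i / D₁) k₀
        have heq : (fun i => (k' i / D₁) / (S:ℤ) - k₀ i / 256)
            = (fun i => k' i / D₀ - k₀ i / 256) := by
          funext i
          rw [aux_ediv_ediv _ hD₁pos (by exact_mod_cast hS), ← hDD]
        rw [heq] at hk
        exact le_trans hk (le_of_eq (by rw [CC, mul_assoc]))
    _ = CC n N * ∑' (k' : IVec n), cwt N (fun i => k' i / D₀ - k₀ i / 256) * G k' := by
        rw [← ENNReal.tsum_mul_left]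
        apply tsum_congr; intro k'; ring
    _ = CC n N *
          ∑' (w : IVec n), cwt N w *
            ∑' (k' : {k' : IVec n // dyadicCube n j' k' ⊆ QW n j₀ k₀ w}), G k'.val := by
        rw [step2]

/-- the summation estimate of Lemma `inequality4`
(`1 < p < ∞`, `δ > 0`, `N > n`), with both sides valued in `[0,∞]`. -/
theorem statement9 (n : ℕ) (hn : 1 ≤ n) (p δ N : ℝ) (hp1 : 1 < p) (hδ : 0 < δ)
    (hN : (n : ℝ) < N) :
    ∃ C : ℝ, 0 < C ∧ ∀ (j₀ : ℤ) (k₀ : IVec n) (j : ℤ), j₀ ≤ j →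
      ∀ a : En n → ℤ → IVec n → ℝ≥0,
      (∑' (ε : En n) (k : {k : IVec n // dyadicCube n j k ⊆ dyadicCube n j₀ k₀}),
        (∑' (j' : {j' : ℤ // j - 5 ≤ j'}) (w : IVec n),
            ENNReal.ofReal ((1 + enorm2 (fun i => (w i : ℝ))) ^ (-N)) *
            (∑' (ε' : En n)
                (k' : {k' : IVec n // dyadicCube n (j' : ℤ) k' ⊆ QW n j (k : IVec n) w}),
                (a ε' (j' : ℤ) (k' : IVec n) : ℝ≥0∞) ^ (p : ℝ)) ^ (1 / p)) ^ (p : ℝ)) ≤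
      ENNReal.ofReal C *
        ∑' (j' : {j' : ℤ // j - 5 ≤ j'}),
          ENNReal.ofReal ((2:ℝ) ^ (δ * (((j' : ℤ) : ℝ) - (j : ℝ)))) *
          ∑' (w : IVec n),
            ENNReal.ofReal ((1 + enorm2 (fun i => (w i : ℝ))) ^ (-N)) *
            ∑' (ε' : En n) (k' : {k' : IVec n // dyadicCube n (j' : ℤ) k' ⊆ QW n j₀ k₀ w}),
              (a ε' (j' : ℤ) (k' : IVec n) : ℝ≥0∞) ^ (p : ℝ) := by
  set q : ℝ := Real.conjExponent p with hqdef
  have hpq : p.HolderConjugate q := Real.HolderConjugate.conjExponent hp1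
  have hqpos : 0 < q := hpq.symm.pos
  have hη : 0 < δ * q / p := div_pos (mul_pos hδ hqpos) hpq.pos
  have hΛt : (Gam (δ*q/p) * Wsum n N) ^ (p/q) ≠ ⊤ := by
    apply (ENNReal.rpow_lt_top_of_nonneg (div_nonneg hpq.nonneg hpq.symm.nonneg) _).ne
    exact ENNReal.mul_ne_top (Gam_lt_top hη).ne (Wsum_lt_top hn hN).ne
  have hCtott : ((Fintype.card (En n) : ℝ≥0∞) * (Gam (δ*q/p) * Wsum n N) ^ (p/q) * CC n N) ≠ ⊤ :=
    ENNReal.mul_ne_top (ENNReal.mul_ne_top (ENNReal.natCast_ne_top _) hΛt) (CC_ne_top hn hN)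
  refine ⟨((Fintype.card (En n) : ℝ≥0∞) * (Gam (δ*q/p) * Wsum n N) ^ (p/q) * CC n N).toReal + 1,
    by positivity, ?_⟩
  intro j₀ k₀ j hj a
  set G : ℤ → IVec n → ℝ≥0∞ := fun j' k' => ∑' (ε' : En n), (a ε' j' k' : ℝ≥0∞) ^ (p:ℝ)
    with hGdef
  calc (∑' (ε : En n) (k : {k : IVec n // dyadicCube n j k ⊆ dyadicCube n j₀ k₀}),
        (∑' (j' : {j' : ℤ // j - 5 ≤ j'}) (w : IVec n),
            ENNReal.ofReal ((1 + enorm2 (fun i => (w i : ℝ))) ^ (-N)) *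
            (∑' (ε' : En n)
                (k' : {k' : IVec n // dyadicCube n (j' : ℤ) k' ⊆ QW n j (k : IVec n) w}),
                (a ε' (j' : ℤ) (k' : IVec n) : ℝ≥0∞) ^ (p : ℝ)) ^ (1 / p)) ^ (p : ℝ))
      = (Fintype.card (En n) : ℝ≥0∞) *
          ∑' (k : {k : IVec n // dyadicCube n j k ⊆ dyadicCube n j₀ k₀}),
          (∑' (j' : {j' : ℤ // j - 5 ≤ j'}) (w : IVec n),
            cwt N w *
            (∑' (k' : {k' : IVec n // dyadicCube n (j' : ℤ) k' ⊆ QW n j k.val w}),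
              G (j' : ℤ) k'.val) ^ (1 / p)) ^ (p : ℝ) := by
        rw [tsum_fintype, Finset.sum_const, Finset.card_univ, nsmul_eq_mul]
        congr 1
        apply tsum_congr; intro k
        congr 1
        apply tsum_congr; intro j'
        apply tsum_congr; intro w
        exact congrArg (fun Z : ℝ≥0∞ => cwt N w * Z ^ (1/p))
          (ENNReal.tsum_comm
            (f := fun (ε' : En n)
              (k' : {k' : IVec n // dyadicCube n (j' : ℤ) k' ⊆ QW n j k.val w}) =>
                (a ε' (j' : ℤ) (k' : IVec n) : ℝ≥0∞) ^ (p : ℝ)))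
    _ ≤ (Fintype.card (En n) : ℝ≥0∞) *
          ∑' (k : {k : IVec n // dyadicCube n j k ⊆ dyadicCube n j₀ k₀}),
          ((Gam (δ*q/p) * Wsum n N) ^ (p/q) *
            ∑' (j' : {j' : ℤ // j - 5 ≤ j'}),
              ENNReal.ofReal ((2:ℝ) ^ (δ * (((j' : ℤ) : ℝ) - (j : ℝ)))) *
              ∑' (w : IVec n), cwt N w *
                (∑' (k' : {k' : IVec n // dyadicCube n (j' : ℤ) k' ⊆ QW n j k.val w}),
                  G (j' : ℤ) k'.val)) := by
        apply mul_le_mul_right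
        apply ENNReal.tsum_le_tsum
        intro k
        exact lemmaH hpq j
          (fun j' w => ∑' (k' : {k' : IVec n // dyadicCube n (j' : ℤ) k' ⊆ QW n j k.val w}),
            G (j' : ℤ) k'.val)
    _ = (Fintype.card (En n) : ℝ≥0∞) * (Gam (δ*q/p) * Wsum n N) ^ (p/q) *
          ∑' (j' : {j' : ℤ // j - 5 ≤ j'}),
            ENNReal.ofReal ((2:ℝ) ^ (δ * (((j' : ℤ) : ℝ) - (j : ℝ)))) *
            ∑' (k : {k : IVec n // dyadicCube n j k ⊆ dyadicCube n j₀ k₀}),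
              ∑' (w : IVec n), cwt N w *
                (∑' (k' : {k' : IVec n // dyadicCube n (j' : ℤ) k' ⊆ QW n j k.val w}),
                  G (j' : ℤ) k'.val) := by
        rw [ENNReal.tsum_mul_left, ← mul_assoc]
        congr 1
        rw [ENNReal.tsum_comm]
        apply tsum_congr; intro j'
        rw [ENNReal.tsum_mul_left]
    _ ≤ (Fintype.card (En n) : ℝ≥0∞) * (Gam (δ*q/p) * Wsum n N) ^ (p/q) *
          ∑' (j' : {j' : ℤ // j - 5 ≤ j'}),
            ENNReal.ofReal ((2:ℝ) ^ (δ * (((j' : ℤ) : ℝ) - (j : ℝ)))) *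
            (CC n N * ∑' (w : IVec n), cwt N w *
                (∑' (k' : {k' : IVec n // dyadicCube n (j' : ℤ) k' ⊆ QW n j₀ k₀ w}),
                  G (j' : ℤ) k'.val)) := by
        apply mul_le_mul_right
        apply ENNReal.tsum_le_tsum
        intro j'
        apply mul_le_mul_right
        exact perJ hn hN j₀ j (j' : ℤ) hj j'.2 k₀ (G (j' : ℤ))
    _ = ((Fintype.card (En n) : ℝ≥0∞) * (Gam (δ*q/p) * Wsum n N) ^ (p/q) * CC n N) *
          ∑' (j' : {j' : ℤ // j - 5 ≤ j'}),
            ENNReal.ofReal ((2:ℝ) ^ (δ * (((j' : ℤ) : ℝ) - (j : ℝ)))) *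
            ∑' (w : IVec n),
              ENNReal.ofReal ((1 + enorm2 (fun i => (w i : ℝ))) ^ (-N)) *
              ∑' (ε' : En n)
                (k' : {k' : IVec n // dyadicCube n (j' : ℤ) k' ⊆ QW n j₀ k₀ w}),
                (a ε' (j' : ℤ) (k' : IVec n) : ℝ≥0∞) ^ (p : ℝ) := by
        have hX : ∀ j' : {j' : ℤ // j - 5 ≤ j'},
            (∑' (w : IVec n), cwt N w *
              ∑' (k' : {k' : IVec n // dyadicCube n (j' : ℤ) k' ⊆ QW n j₀ k₀ w}),
                G (j' : ℤ) k'.val)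
            = ∑' (w : IVec n),
                ENNReal.ofReal ((1 + enorm2 (fun i => (w i : ℝ))) ^ (-N)) *
                ∑' (ε' : En n) (k' : {k' : IVec n // dyadicCube n (j' : ℤ) k' ⊆ QW n j₀ k₀ w}),
                  (a ε' (j' : ℤ) (k' : IVec n) : ℝ≥0∞) ^ (p : ℝ) := by
          intro j'
          apply tsum_congr; intro w
          exact congrArg (fun Z : ℝ≥0∞ => cwt N w * Z)
            (ENNReal.tsum_comm
              (f := fun (k' : {k' : IVec n // dyadicCube n (j' : ℤ) k' ⊆ QW n j₀ k₀ w})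
                (ε' : En n) => (a ε' (j' : ℤ) (k' : IVec n) : ℝ≥0∞) ^ (p : ℝ)))
        have hSig : (∑' (j' : {j' : ℤ // j - 5 ≤ j'}),
              ENNReal.ofReal ((2:ℝ) ^ (δ * (((j' : ℤ) : ℝ) - (j : ℝ)))) *
              (CC n N * ∑' (w : IVec n), cwt N w *
                (∑' (k' : {k' : IVec n // dyadicCube n (j' : ℤ) k' ⊆ QW n j₀ k₀ w}),
                  G (j' : ℤ) k'.val)))
            = CC n N * ∑' (j' : {j' : ℤ // j - 5 ≤ j'}),
                ENNReal.ofReal ((2:ℝ) ^ (δ * (((j' : ℤ) : ℝ) - (j : ℝ)))) *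
                ∑' (w : IVec n),
                  ENNReal.ofReal ((1 + enorm2 (fun i => (w i : ℝ))) ^ (-N)) *
                  ∑' (ε' : En n) (k' : {k' : IVec n // dyadicCube n (j' : ℤ) k' ⊆ QW n j₀ k₀ w}),
                    (a ε' (j' : ℤ) (k' : IVec n) : ℝ≥0∞) ^ (p : ℝ) := by
          rw [← ENNReal.tsum_mul_left]
          apply tsum_congr; intro j'
          rw [← hX j']
          ring
        rw [hSig]
        ring
    _ ≤ ENNReal.ofReal
          (((Fintype.card (En n) : ℝ≥0∞) * (Gam (δ*q/p) * Wsum n N) ^ (p/q) * CC n N).toReal + 1) *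
          ∑' (j' : {j' : ℤ // j - 5 ≤ j'}),
            ENNReal.ofReal ((2:ℝ) ^ (δ * (((j' : ℤ) : ℝ) - (j : ℝ)))) *
            ∑' (w : IVec n),
              ENNReal.ofReal ((1 + enorm2 (fun i => (w i : ℝ))) ^ (-N)) *
              ∑' (ε' : En n)
                (k' : {k' : IVec n // dyadicCube n (j' : ℤ) k' ⊆ QW n j₀ k₀ w}),
                (a ε' (j' : ℤ) (k' : IVec n) : ℝ≥0∞) ^ (p : ℝ) := by
        apply mul_le_mul_left
        conv_lhs => rw [← ENNReal.ofReal_toReal hCtott]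
        apply ENNReal.ofReal_le_ofReal
        linarith [ENNReal.toReal_nonneg
          (a := (Fintype.card (En n) : ℝ≥0∞) * (Gam (δ*q/p) * Wsum n N) ^ (p/q) * CC n N)]
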